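/- Suppose every d×d Hermitian positive semidefinite matrix ρ with tr(ρ)=1 and tr(ρ²) ≤ 1/(d−1) belongs to a set SEP, and suppose W is a d×d Hermitian matrix with tr(Wρ) ≥ 0 for all ρ ∈ SEP. Then tr(W)² ≥ tr(W²), i.e. the factor α = tr(W)/√(tr(W²)) satisfies α² ≥ 1. -/

import Mathlib

set_option maxHeartbeats 1000000

theorem stmt_2 (d : ℕ) (hd : 2 ≤ d)
    (SEP : Set (Matrix (Fin d) (Fin d) ℂ))
    (hball : ∀ ρ : Matrix (Fin d) (Fin d) ℂ, ρ.IsHermitian → ρ.trace = 1 →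
      (ρ * ρ).trace.re ≤ 1 / ((d : ℝ) - 1) → ρ ∈ SEP)
    (W : Matrix (Fin d) (Fin d) ℂ) (hW : W.IsHermitian)
    (hwitness : ∀ ρ ∈ SEP, 0 ≤ (W * ρ).trace.re)
    (hW2 : 0 < (W * W).trace.re) :
    (W * W).trace.re ≤ W.trace.re ^ 2 := by
  have hd0 : (0:ℝ) < d := by positivity
  have hd1 : (1:ℝ) ≤ (d:ℝ) - 1 := by
    have : (2:ℝ) ≤ d := by exact_mod_cast hd
    linarith
  have hdne : (d:ℂ) ≠ 0 := by exact_mod_cast hd0.ne'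
  set t : ℝ := W.trace.re with ht
  have htr : W.trace = (t : ℂ) := by
    have h1 : star W.trace = W.trace := by
      rw [← Matrix.trace_conjTranspose, hW.eq]
    exact (Complex.conj_eq_iff_re.mp h1).symm
  set σ : Matrix (Fin d) (Fin d) ℂ := W - ((t/d : ℝ) : ℂ) • 1 with hσ
  have hσH : σ.IsHermitian := by
    unfold Matrix.IsHermitian
    simp [hσ, Matrix.conjTranspose_sub, Matrix.conjTranspose_smul, hW.eq,
      Complex.star_def, Complex.conj_ofReal]
  have htr1 : Matrix.trace (1 : Matrix (Fin d) (Fin d) ℂ) = (d : ℂ) := by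
    simp [Matrix.trace_one]
  have hσtr : σ.trace = 0 := by
    simp only [hσ, Matrix.trace_sub, Matrix.trace_smul, htr1, htr, smul_eq_mul]
    push_cast
    field_simp
    ring
  set s2 : ℝ := (W * W).trace.re with hs2
  have hσσ : (σ*σ).trace = (W*W).trace - ((t^2/d : ℝ) : ℂ) := by
    simp only [hσ, sub_mul, mul_sub, Matrix.smul_mul, Matrix.mul_smul, one_mul, mul_one,
      smul_smul, Matrix.trace_sub, Matrix.trace_smul, htr1, htr, smul_eq_mul]
    push_cast
    field_simp
    ring
  have hWσ : (W*σ).trace = (W*W).trace - ((t^2/d : ℝ) : ℂ) := by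
    simp only [hσ, mul_sub, Matrix.mul_smul, mul_one, Matrix.trace_sub, Matrix.trace_smul,
      htr, smul_eq_mul]
    push_cast
    ring
  set c : ℝ := (σ*σ).trace.re with hc
  have hcval : c = s2 - t^2/d := by
    rw [hc, hσσ, Complex.sub_re, Complex.ofReal_re, hs2]
  have hc0 : 0 ≤ c := by
    have heq : σ * σ = σ.conjTranspose * σ := by rw [hσH]
    rw [hc, heq, Matrix.trace]
    rw [Complex.re_sum]
    apply Finset.sum_nonneg
    intro j _
    rw [Matrix.diag_apply, Matrix.mul_apply, Complex.re_sum]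
    apply Finset.sum_nonneg
    intro i _
    simp [Matrix.conjTranspose_apply, Complex.mul_re]
    nlinarith [sq_nonneg (σ i j).re, sq_nonneg (σ i j).im]
  rcases eq_or_lt_of_le hc0 with hczero | hcpos
  · -- c = 0 : s2 = t^2/d ≤ t^2
    have hs2eq : s2 = t^2/d := by
      rw [← hczero] at hcval; linarith
    have hfin : s2 ≤ t^2 := by
      rw [hs2eq, div_le_iff₀ hd0]
      nlinarith [sq_nonneg t]
    exact hfin
  · -- c > 0
    set K : ℝ := Real.sqrt (c * (d * ((d:ℝ) - 1))) with hK
    have hKpos : 0 < K := by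
      apply Real.sqrt_pos.mpr
      positivity
    have hK2 : K * K = c * (d * ((d:ℝ) - 1)) := by
      rw [hK]
      exact Real.mul_self_sqrt (by positivity)
    set x : ℝ := -(1/K) with hx
    set ρ : Matrix (Fin d) (Fin d) ℂ := ((1/d : ℝ) : ℂ) • 1 + (x : ℂ) • σ with hρ
    have hρH : ρ.IsHermitian := by
      unfold Matrix.IsHermitian
      simp [hρ, Matrix.conjTranspose_add, Matrix.conjTranspose_smul, hσH.eq,
        Complex.star_def, Complex.conj_ofReal]
    have hρtr : ρ.trace = 1 := by
      simp only [hρ, Matrix.trace_add, Matrix.trace_smul, htr1, hσtr, smul_eq_mul, mul_zero,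
        add_zero]
      push_cast
      field_simp
    have hρρ : (ρ * ρ).trace.re = 1/d + x^2 * c := by
      have : (ρ*ρ).trace = ((1/d:ℝ):ℂ)^2 * (d:ℂ) + (2*(1/d)*x : ℝ) * σ.trace
          + ((x:ℝ):ℂ)^2 * (σ*σ).trace := by
        simp only [hρ, add_mul, mul_add, Matrix.smul_mul, Matrix.mul_smul, one_mul, mul_one,
          smul_smul, Matrix.trace_add, Matrix.trace_smul, htr1, smul_eq_mul]
        push_cast
        ring
      rw [this, hσtr]
      simp only [mul_zero, add_zero]
      rw [Complex.add_re]
      have h1 : (((1/d:ℝ):ℂ)^2 * (d:ℂ)).re = 1/d := by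
        have : ((1/d:ℝ):ℂ)^2 * (d:ℂ) = (((1/d)^2 * d : ℝ) : ℂ) := by push_cast; ring
        rw [this, Complex.ofReal_re]
        field_simp
      have h2 : (((x:ℝ):ℂ)^2 * (σ*σ).trace).re = x^2 * c := by
        rw [show ((x:ℝ):ℂ)^2 = ((x^2 : ℝ) : ℂ) by push_cast; ring, Complex.re_ofReal_mul, ← hc]
      rw [h1, h2]
    have hmem : ρ ∈ SEP := by
      apply hball ρ hρH hρtr
      rw [hρρ]
      have hx2 : x^2 = 1/(c * (d * ((d:ℝ)-1))) := by
        rw [hx]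
        field_simp
        nlinarith [hK2]
      rw [hx2]
      have : 1/d + 1/(c * (d * ((d:ℝ)-1))) * c = 1/((d:ℝ)-1) := by
        field_simp
        ring
      rw [this]
    have hwit := hwitness ρ hmem
    have hWρ : (W * ρ).trace.re = t/d + x * c := by
      have : (W*ρ).trace = ((1/d : ℝ):ℂ) * W.trace + ((x:ℝ):ℂ) * (W*σ).trace := by
        simp only [hρ, mul_add, Matrix.mul_smul, mul_one, Matrix.trace_add, Matrix.trace_smul,
          smul_eq_mul]
      rw [this, Complex.add_re, Complex.re_ofReal_mul, Complex.re_ofReal_mul, htr,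
        Complex.ofReal_re, hWσ]
      have : ((W*W).trace - ((t^2/d : ℝ) : ℂ)).re = c := by
        rw [Complex.sub_re, Complex.ofReal_re, ← hs2, ← hcval]
      rw [this]
      ring
    rw [hWρ] at hwit
    -- from 0 ≤ t/d + x*c with x = -(1/K): t*K ≥ c*d
    have hkey : c * d ≤ t * K := by
      have h := mul_nonneg (le_of_lt (mul_pos hd0 hKpos)) hwit
      rw [hx] at h
      have hexp : ((d:ℝ)*K)*(t/d + -(1/K)*c) = t*K - c*d := by
        field_simp
        ring
      rw [hexp] at h
      linarith
    -- square it
    have htK : 0 ≤ t * K := le_trans (by positivity) hkey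
    have hsq : (c*d)*(c*d) ≤ (t*K)*(t*K) :=
      mul_le_mul hkey hkey (by positivity) htK
    rw [show (t*K)*(t*K) = t^2 * (K*K) by ring, hK2] at hsq
    have hfin : c * (d:ℝ) ≤ t^2 * ((d:ℝ) - 1) := by
      have hcd : 0 < c * (d:ℝ) := mul_pos hcpos hd0
      have h1 : t^2 * (c * ((d:ℝ) * ((d:ℝ)-1))) = (t^2*((d:ℝ)-1)) * (c*(d:ℝ)) := by ring
      have h2 : (c*(d:ℝ)) * (c*(d:ℝ)) ≤ (t^2*((d:ℝ)-1)) * (c*(d:ℝ)) := by linarith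
      exact le_of_mul_le_mul_right h2 hcd
    have hsc : s2 = c + t^2/d := by rw [hcval]; ring
    have hsd : s2 * d = c * d + t^2 := by
      rw [hsc]; field_simp
    have hexp2 : t^2*((d:ℝ)-1) = t^2*(d:ℝ) - t^2 := by ring
    have hmul : s2 * (d:ℝ) ≤ t^2 * (d:ℝ) := by linarith
    exact (mul_le_mul_iff_of_pos_right hd0).mp hmul
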